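/- (Truncated Hadamard matrices give a strict classical–quantum gap.) Let n = 4d with d ≥ 1 a natural number, let H be an n×n real matrix with entries in {−1,1} satisfying H Hᵀ = n·I (a Hadamard matrix), and let H' be the (n−1)×n matrix obtained from H by deleting one row. Then max over a ∈ {−1,1}^{n−1} of Σ_{j=1}^n |Σ_{i=1}^{n−1} H'_{ij} a_i| < n·√(n−1). Equivalently, for the ROCN matrix h = H'/√(n−1), the classical bound satisfies β_C^h < β_Q^h = n. -/
import Mathlib


open Matrix Finset

/-- (Truncated Hadamard matrices give a strict classical–quantum gap.)
Let `n = 4d` (`d ≥ 1`) and let `H` be an `n × n` Hadamard matrix (entries `±1`,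
`H Hᵀ = n I`). Delete any row `i₀`. Then every deterministic classical value of the
truncated matrix is strictly below `n √(n−1)`; i.e.
`max_{a ∈ {±1}^{n−1}} Σⱼ |Σ_{i ≠ i₀} Hᵢⱼ aᵢ| < n √(n−1)`. Equivalently, for the ROCN
matrix `h = H'/√(n−1)` one has `β_C^h < β_Q^h = n`. -/
theorem truncated_hadamard_strict_gap {d n : ℕ} (hd : 1 ≤ d) (hn : n = 4 * d)
    (H : Matrix (Fin n) (Fin n) ℝ)
    (hent : ∀ i j, H i j = 1 ∨ H i j = -1)
    (hHad : H * Hᵀ = (n : ℝ) • 1)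
    (i₀ : Fin n) :
    ∀ a : Fin n → ℝ, (∀ i, i ≠ i₀ → a i = 1 ∨ a i = -1) →
      ∑ j, |∑ i ∈ Finset.univ.erase i₀, H i j * a i|
        < n * Real.sqrt ((n : ℝ) - 1) := by
  intro a ha
  haveI : NeZero n := ⟨by omega⟩
  set s := Finset.univ.erase i₀ with hs
  have hcard : s.card = n - 1 := by simp [hs]
  set v : Fin n → ℝ := fun j => ∑ i ∈ s, H i j * a i with hv
  have hn4 : (4:ℕ) ≤ n := by omega
  have hnR4 : (4:ℝ) ≤ (n:ℝ) := by exact_mod_cast hn4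
  have h0 : (0:ℝ) < (n:ℝ) - 1 := by linarith
  -- column orthogonality
  have horth : ∀ i i' : Fin n, ∑ j, H i j * H i' j = if i = i' then (n:ℝ) else 0 := by
    intro i i'
    have := congrFun (congrFun hHad i) i'
    simpa [Matrix.mul_apply, Matrix.transpose_apply, Matrix.one_apply,
      Matrix.smul_apply, mul_ite] using this
  -- sum of squares
  have hsq : ∑ j, (v j)^2 = (n:ℝ) * ((n:ℝ) - 1) := by
    have hexp : ∀ j, (v j)^2 = ∑ i ∈ s, ∑ i' ∈ s, (a i * a i') * (H i j * H i' j) := by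
      intro j
      rw [sq, hv]
      rw [Finset.sum_mul_sum]
      exact Finset.sum_congr rfl fun i _ => Finset.sum_congr rfl fun i' _ => by ring
    calc ∑ j, (v j)^2
        = ∑ j, ∑ i ∈ s, ∑ i' ∈ s, (a i * a i') * (H i j * H i' j) := by
          exact Finset.sum_congr rfl fun j _ => hexp j
      _ = ∑ i ∈ s, ∑ j, ∑ i' ∈ s, (a i * a i') * (H i j * H i' j) := Finset.sum_comm
      _ = ∑ i ∈ s, ∑ i' ∈ s, ∑ j, (a i * a i') * (H i j * H i' j) :=
          Finset.sum_congr rfl fun i _ => Finset.sum_comm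
      _ = ∑ i ∈ s, ∑ i' ∈ s, (a i * a i') * ∑ j, H i j * H i' j := by
          exact Finset.sum_congr rfl fun i _ => Finset.sum_congr rfl fun i' _ =>
            (Finset.mul_sum _ _ _).symm
      _ = ∑ i ∈ s, ∑ i' ∈ s, (a i * a i') * (if i = i' then (n:ℝ) else 0) := by
          exact Finset.sum_congr rfl fun i _ => Finset.sum_congr rfl fun i' _ => by
            rw [horth]
      _ = ∑ i ∈ s, (a i * a i) * (n:ℝ) := by
          refine Finset.sum_congr rfl fun i hi => ?_
          rw [Finset.sum_eq_single i]
          · simp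
          · intro i' _ hne; simp [Ne.symm hne]
          · intro hni; exact absurd hi hni
      _ = ∑ i ∈ s, (n:ℝ) := by
          refine Finset.sum_congr rfl fun i hi => ?_
          rcases ha i (Finset.mem_erase.mp hi).1 with h1 | h1 <;> rw [h1] <;> ring
      _ = (n:ℝ) * ((n:ℝ) - 1) := by
          rw [Finset.sum_const, hcard, nsmul_eq_mul]
          have : ((n - 1 : ℕ) : ℝ) = (n:ℝ) - 1 := by
            have : (1:ℕ) ≤ n := by omega
            push_cast [this]; ring
          rw [this]; ring
  -- each v j is an integer
  have hint : ∀ j, ∃ m : ℤ, v j = (m:ℝ) := by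
    intro j
    refine ⟨∑ i ∈ s, if H i j * a i = 1 then 1 else -1, ?_⟩
    rw [hv]
    push_cast
    refine Finset.sum_congr rfl fun i hi => ?_
    rcases hent i j with h1 | h1 <;> rcases ha i (Finset.mem_erase.mp hi).1 with h2 | h2 <;>
      norm_num [h1, h2]
  -- v j ^ 2 ≠ n - 1
  have hne : ∀ j, (v j)^2 ≠ (n:ℝ) - 1 := by
    intro j hcon
    obtain ⟨m, hm⟩ := hint j
    rw [hm] at hcon
    have hz : m^2 = (n:ℤ) - 1 := by exact_mod_cast hcon
    rw [hn] at hz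
    push_cast at hz
    rcases Int.even_or_odd m with ⟨k, hk⟩ | ⟨k, hk⟩ <;> subst hk
    · have h4 : (4:ℤ) ∣ 4*(d:ℤ) - 1 := ⟨k*k, by linear_combination -hz⟩
      omega
    · have h4 : (4:ℤ) ∣ 4*(d:ℤ) - 2 := ⟨k*k + k, by linear_combination -hz⟩
      omega
  -- key pointwise strict AM-GM
  have hsqrt : Real.sqrt ((n:ℝ)-1) ^ 2 = (n:ℝ)-1 := Real.sq_sqrt h0.le
  have key : ∀ j, |v j| * (2 * Real.sqrt ((n:ℝ)-1)) < (v j)^2 + ((n:ℝ)-1) := by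
    intro j
    have habs : |v j| ≠ Real.sqrt ((n:ℝ)-1) := by
      intro h
      apply hne j
      rw [← sq_abs, h, hsqrt]
    have hpos : 0 < (|v j| - Real.sqrt ((n:ℝ)-1))^2 := by
      have : |v j| - Real.sqrt ((n:ℝ)-1) ≠ 0 := sub_ne_zero.mpr habs
      positivity
    nlinarith [sq_abs (v j), abs_nonneg (v j), Real.sqrt_nonneg ((n:ℝ)-1)]
  -- sum the strict inequalities
  have hsum : ∑ j, |v j| * (2 * Real.sqrt ((n:ℝ)-1))
      < ∑ j, ((v j)^2 + ((n:ℝ)-1)) :=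
    Finset.sum_lt_sum_of_nonempty Finset.univ_nonempty fun j _ => key j
  have hR : ∑ j, ((v j)^2 + ((n:ℝ)-1)) = 2 * ((n:ℝ) * ((n:ℝ)-1)) := by
    rw [Finset.sum_add_distrib, hsq, Finset.sum_const, Finset.card_univ,
      Fintype.card_fin, nsmul_eq_mul]
    ring
  have hL : ∑ j, |v j| * (2 * Real.sqrt ((n:ℝ)-1))
      = (∑ j, |v j|) * (2 * Real.sqrt ((n:ℝ)-1)) := (Finset.sum_mul _ _ _).symm
  rw [hL, hR] at hsum
  have hs0 : 0 < Real.sqrt ((n:ℝ)-1) := Real.sqrt_pos.mpr h0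
  have hrhs : ((n:ℝ) * Real.sqrt ((n:ℝ)-1)) * (2 * Real.sqrt ((n:ℝ)-1))
      = 2 * ((n:ℝ) * ((n:ℝ)-1)) := by
    nlinarith [hsqrt]
  have : (∑ j, |v j|) * (2 * Real.sqrt ((n:ℝ)-1))
      < ((n:ℝ) * Real.sqrt ((n:ℝ)-1)) * (2 * Real.sqrt ((n:ℝ)-1)) := by
    rw [hrhs]; exact hsum
  exact lt_of_mul_lt_mul_right this (by positivity)
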